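/- Let k_e > 0 and let Ω₀ : [0,∞) → ℝ³ be continuous and bounded, and let k_R > 0 and k_Ω > 0. Then there exist constants C > 0 and λ > 0 such that every solution (Z_s, z, ω) : [0,∞) → Sym(ℝ^{3×3}) × ℝ³ × ℝ³ of the closed-loop system Ż_s = [Z_s, Ω̂₀(t)] − 2k_e Z_s, ż = z × Ω₀(t) + ω, ω̇ = −k_R z − k_Ω ω + ω × Ω₀(t), satisfies ‖Z_s(t)‖ + ‖z(t)‖ + ‖ω(t)‖ ≤ C·e^{−λt}·(‖Z_s(0)‖ + ‖z(0)‖ + ‖ω(0)‖) for all t ≥ 0. -/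

import Mathlib

open Matrix

attribute [local instance] Matrix.frobeniusNormedAddCommGroup Matrix.frobeniusNormedSpace

noncomputable section

abbrev Mat3 := Matrix (Fin 3) (Fin 3) ℝ

/-- Frobenius inner product. -/
def finner (A B : Mat3) : ℝ := (Aᵀ * B).trace

/-- Euclidean norm on ℝ³. -/
def enorm3 (v : Fin 3 → ℝ) : ℝ := Real.sqrt (∑ i, v i ^ 2)

/-- The hat map. -/
def hat (v : Fin 3 → ℝ) : Mat3 :=
  !![0, -v 2, v 1; v 2, 0, -v 0; -v 1, v 0, 0]

/-- The vee map, inverse of the hat map on skew-symmetric matrices. -/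
def vee (A : Mat3) : Fin 3 → ℝ := ![A 2 1, A 0 2, A 1 0]

/-- The cross product on ℝ³. -/
def cross (u v : Fin 3 → ℝ) : Fin 3 → ℝ :=
  ![u 1 * v 2 - u 2 * v 1, u 2 * v 0 - u 0 * v 2, u 0 * v 1 - u 1 * v 0]

/-- Symmetrization operator. -/
def symPart (A : Mat3) : Mat3 := (2⁻¹ : ℝ) • (A + Aᵀ)

/-- Skew-symmetrization operator. -/
def skewPart (A : Mat3) : Mat3 := (2⁻¹ : ℝ) • (A - Aᵀ)

/-- `SO(3)`: rotation matrices. -/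
def SO3 : Set Mat3 := {R | Rᵀ * R = 1 ∧ 0 < R.det}

/-- The matrix commutator. -/
def mcomm (A B : Mat3) : Mat3 := A * B - B * A

/-- A real square matrix is Hurwitz if every complex eigenvalue (root of its
characteristic polynomial over ℂ) has negative real part. -/
def IsHurwitzMat {n : Type*} [Fintype n] [DecidableEq n] (M : Matrix n n ℝ) : Prop :=
  ∀ μ : ℂ, (M.map (algebraMap ℝ ℂ)).charpoly.eval μ = 0 → μ.re < 0

/-- A real polynomial is Hurwitz if all of its complex roots have negative real part. -/
def IsHurwitzPoly (p : Polynomial ℝ) : Prop :=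
  ∀ μ : ℂ, (p.map (algebraMap ℝ ℂ)).eval μ = 0 → μ.re < 0

/- ===== auxiliary material for the proof ===== -/

private lemma key_const {f : ℝ → ℝ} (hf : ∀ t, 0 ≤ t → HasDerivAt f 0 t) :
    ∀ t, 0 ≤ t → f t = f 0 := by
  intro t ht
  have hc : ContinuousOn f (Set.Icc 0 t) := fun x hx =>
    (hf x hx.1).continuousAt.continuousWithinAt
  exact constant_of_has_deriv_right_zero hc
    (fun x hx => (hf x hx.1).hasDerivWithinAt) t ⟨ht, le_refl t⟩

private lemma key_mono {f f' : ℝ → ℝ} (hf : ∀ t, 0 ≤ t → HasDerivAt f (f' t) t)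
    (h' : ∀ t, 0 ≤ t → f' t ≤ 0) : ∀ t, 0 ≤ t → f t ≤ f 0 := by
  intro t ht
  rcases eq_or_lt_of_le ht with h | h
  · rw [← h]
  have := antitoneOn_of_deriv_nonpos (convex_Icc (0:ℝ) t)
    (fun x hx => (hf x hx.1).continuousAt.continuousWithinAt)
    (fun x hx => by
      rw [interior_Icc] at hx
      exact ((hf x hx.1.le).differentiableAt.differentiableWithinAt))
    (fun x hx => by
      rw [interior_Icc] at hx
      rw [(hf x hx.1.le).deriv]
      exact h' x hx.1.le)
  exact this (Set.left_mem_Icc.2 ht) (Set.mem_Icc.2 ⟨ht, le_refl t⟩) ht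

private def entryLM (i j : Fin 3) : Mat3 →ₗ[ℝ] ℝ where
  toFun A := A i j
  map_add' := fun _ _ => rfl
  map_smul' := fun _ _ => rfl

private def entryCLM (i j : Fin 3) : Mat3 →L[ℝ] ℝ :=
  LinearMap.toContinuousLinearMap (entryLM i j)

private lemma fro_norm (A : Mat3) : ‖A‖ = Real.sqrt (∑ i, ∑ j, (A i j)^2) := by
  rw [frobenius_norm_def, Real.sqrt_eq_rpow]
  norm_num [Real.norm_eq_abs, sq_abs]

private lemma sqrt_exp' (x : ℝ) : Real.sqrt (Real.exp x) = Real.exp (x/2) := by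
  rw [show Real.exp x = (Real.exp (x/2))^2 by rw [sq, ← Real.exp_add]; norm_num,
    Real.sqrt_sq (Real.exp_nonneg _)]

private lemma Wequiv (kR ε b c d : ℝ) (hkR : 0 < kR) (hb : 0 ≤ b) (hc : 0 ≤ c)
    (hd : d^2 ≤ b*c) (hε0 : 0 < ε) (hε1 : ε ≤ 1) (hεR : ε ≤ kR) :
    (1/2)*(kR*b+c) ≤ kR*b + c + ε*d ∧ kR*b + c + ε*d ≤ (3/2)*(kR*b+c) := by
  have hε2 : ε^2 ≤ kR := by nlinarith
  have h1 : ε^2*d^2 ≤ kR*(b*c) := mul_le_mul hε2 hd (sq_nonneg d) hkR.le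
  have h2 : 4*(kR*(b*c)) ≤ (kR*b+c)^2 := by nlinarith [sq_nonneg (kR*b - c)]
  have hs : 0 ≤ kR*b + c := by positivity
  constructor
  · nlinarith [h1, h2, hs]
  · nlinarith [h1, h2, hs]

private lemma quadIneq (kR kΩ ε b c d : ℝ) (hkR : 0 < kR) (hkΩ : 0 < kΩ) (hb : 0 ≤ b)
    (hc : 0 ≤ c) (hd : d^2 ≤ b*c) (hε0 : 0 < ε) (hεΩ : ε ≤ kΩ) (hεRΩ : ε * kΩ ≤ kR) :
    -2*kΩ*c + ε*(-(kR*b) - kΩ*d + c) + (ε/2)*(kR*b + c + ε*d) ≤ 0 := by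
  have hQ : 0 ≤ 2*kΩ - 3/2*ε := by linarith
  have hB : 0 ≤ ε*(kΩ - ε/2) := by nlinarith
  have s1 : (ε*kΩ)*(ε*kΩ) ≤ kR*(ε*kΩ) :=
    mul_le_mul_of_nonneg_right hεRΩ (mul_nonneg hε0.le hkΩ.le)
  have s2 : (ε*(kΩ - ε/2))^2 ≤ (ε*kΩ)*(ε*kΩ) := by nlinarith [sq_nonneg ε, mul_pos hε0 hkΩ]
  have s3 : kR*(ε*kΩ) ≤ 4*(kR*ε/2)*(2*kΩ - 3/2*ε) := by
    nlinarith [mul_nonneg (mul_nonneg hkR.le hε0.le) (by linarith : (0:ℝ) ≤ kΩ - ε)]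
  have hBsq : (ε*(kΩ - ε/2))^2 ≤ 4*(kR*ε/2)*(2*kΩ - 3/2*ε) := by linarith
  have h1 : (ε*(kΩ - ε/2))^2 * d^2 ≤ 4*(kR*ε/2)*(2*kΩ - 3/2*ε)*(b*c) := by
    have := mul_le_mul hBsq hd (sq_nonneg d) (by positivity)
    linarith
  have h2 : 4*(kR*ε/2)*(2*kΩ - 3/2*ε)*(b*c) ≤ (kR*ε/2*b + (2*kΩ - 3/2*ε)*c)^2 := by
    nlinarith [sq_nonneg (kR*ε/2*b - (2*kΩ - 3/2*ε)*c)]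
  have hs : 0 ≤ kR*ε/2*b + (2*kΩ - 3/2*ε)*c := by positivity
  nlinarith [h1, h2, hs]

set_option maxHeartbeats 1000000 in
/-- Proposition 5: the feedback `Δu = −k_R z − k_Ω ΔΩ + ΔΩ × Ω₀` exponentially
stabilizes the origin of the linearized rigid body tracking error dynamics. -/
theorem prop5_exp_stabilization (ke : ℝ) (hke : 0 < ke)
    (Ω₀ : ℝ → Fin 3 → ℝ)
    (hΩ₀cont : ContinuousOn Ω₀ (Set.Ici 0))
    (hΩ₀bdd : ∃ M, ∀ t, 0 ≤ t → enorm3 (Ω₀ t) ≤ M)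
    (kR kΩ : ℝ) (hkR : 0 < kR) (hkΩ : 0 < kΩ) :
    ∃ C > (0:ℝ), ∃ lam > (0:ℝ),
      ∀ (Zs : ℝ → Mat3) (z ω : ℝ → Fin 3 → ℝ),
        (∀ t, 0 ≤ t → (Zs t)ᵀ = Zs t) →
        (∀ t, 0 ≤ t →
          HasDerivAt Zs (mcomm (Zs t) (hat (Ω₀ t)) - (2 * ke) • Zs t) t) →
        (∀ t, 0 ≤ t → HasDerivAt z (cross (z t) (Ω₀ t) + ω t) t) →
        (∀ t, 0 ≤ t → HasDerivAt ω
          ((-kR) • z t - kΩ • ω t + cross (ω t) (Ω₀ t)) t) →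
        ∀ t, 0 ≤ t →
          ‖Zs t‖ + enorm3 (z t) + enorm3 (ω t) ≤
            C * Real.exp (-lam * t) * (‖Zs 0‖ + enorm3 (z 0) + enorm3 (ω 0)) := by
  classical
  set ε : ℝ := min 1 (min kR (min kΩ (kR / kΩ))) with hεdef
  have hε0 : 0 < ε :=
    lt_min one_pos (lt_min hkR (lt_min hkΩ (div_pos hkR hkΩ)))
  have hε1 : ε ≤ 1 := min_le_left _ _
  have hεR : ε ≤ kR := (min_le_right _ _).trans (min_le_left _ _)
  have hεΩ : ε ≤ kΩ := (min_le_right _ _).trans ((min_le_right _ _).trans (min_le_left _ _))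
  have hεRΩ : ε * kΩ ≤ kR := by
    have h : ε ≤ kR / kΩ :=
      (min_le_right _ _).trans ((min_le_right _ _).trans (min_le_right _ _))
    calc ε * kΩ ≤ (kR/kΩ) * kΩ := mul_le_mul_of_nonneg_right h hkΩ.le
      _ = kR := div_mul_cancel₀ _ (ne_of_gt hkΩ)
  set m : ℝ := min kR 1 with hmdef
  set M : ℝ := max kR 1 with hMdef
  have hm : 0 < m := lt_min hkR one_pos
  have hM : 0 < M := lt_of_lt_of_le one_pos (le_max_right _ _)
  have hmkR : m ≤ kR := min_le_left _ _
  have hm1 : m ≤ 1 := min_le_right _ _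
  have hkRM : kR ≤ M := le_max_left _ _
  have h1M : 1 ≤ M := le_max_right _ _
  set K : ℝ := Real.sqrt (6*M/m) with hKdef
  have hK0 : 0 ≤ K := Real.sqrt_nonneg _
  set lam : ℝ := min (2*ke) (ε/4) with hlamdef
  have hlam0 : 0 < lam := lt_min (by linarith) (by linarith)
  have hlamke : lam ≤ 2*ke := min_le_left _ _
  have hlamε : lam ≤ ε/4 := min_le_right _ _
  refine ⟨1 + K, by positivity, lam, hlam0, ?_⟩
  intro Zs z ω hsym hZ hz hω t ht
  -- component derivatives
  have hzi : ∀ s, 0 ≤ s → ∀ i, HasDerivAt (fun r => z r i)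
      ((cross (z s) (Ω₀ s) + ω s) i) s := fun s hs i =>
    (ContinuousLinearMap.proj i (R := ℝ)
      (φ := fun _ : Fin 3 => ℝ)).hasFDerivAt.comp_hasDerivAt s (hz s hs)
  have hωi : ∀ s, 0 ≤ s → ∀ i, HasDerivAt (fun r => ω r i)
      (((-kR) • z s - kΩ • ω s + cross (ω s) (Ω₀ s)) i) s := fun s hs i =>
    (ContinuousLinearMap.proj i (R := ℝ)
      (φ := fun _ : Fin 3 => ℝ)).hasFDerivAt.comp_hasDerivAt s (hω s hs)
  have hZij : ∀ s, 0 ≤ s → ∀ i j, HasDerivAt (fun r => Zs r i j)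
      ((mcomm (Zs s) (hat (Ω₀ s)) - (2 * ke) • Zs s) i j) s := fun s hs i j =>
    (entryCLM i j).hasFDerivAt.comp_hasDerivAt s (hZ s hs)
  -- scalar quantities
  set A : ℝ → ℝ := fun s => ∑ i, ∑ j, (Zs s i j)^2 with hAdef
  set B : ℝ → ℝ := fun s => ∑ i, (z s i)^2 with hBdef
  set Cc : ℝ → ℝ := fun s => ∑ i, (ω s i)^2 with hCdef
  set D : ℝ → ℝ := fun s => ∑ i, z s i * ω s i with hDdef
  have hAnn : ∀ s, 0 ≤ A s := fun s =>
    Finset.sum_nonneg fun i _ => Finset.sum_nonneg fun j _ => sq_nonneg _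
  have hBnn : ∀ s, 0 ≤ B s := fun s => Finset.sum_nonneg fun i _ => sq_nonneg _
  have hCnn : ∀ s, 0 ≤ Cc s := fun s => Finset.sum_nonneg fun i _ => sq_nonneg _
  have hCS : ∀ s, (D s)^2 ≤ B s * Cc s := by
    intro s
    simp only [hBdef, hCdef, hDdef, Fin.sum_univ_three]
    nlinarith [sq_nonneg (z s 0 * ω s 1 - z s 1 * ω s 0),
      sq_nonneg (z s 0 * ω s 2 - z s 2 * ω s 0),
      sq_nonneg (z s 1 * ω s 2 - z s 2 * ω s 1)]
  -- derivative of A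
  have hAd : ∀ s, 0 ≤ s → HasDerivAt A (-(4*ke) * A s) s := by
    intro s hs
    have h1 : HasDerivAt A (∑ i, ∑ j, (2:ℕ) * (Zs s i j)^(2-1) *
        ((mcomm (Zs s) (hat (Ω₀ s)) - (2 * ke) • Zs s) i j)) s :=
      HasDerivAt.fun_sum fun i _ => HasDerivAt.fun_sum fun j _ => (hZij s hs i j).pow 2
    convert h1 using 1
    have e10 : Zs s 1 0 = Zs s 0 1 := by
      conv_lhs => rw [← hsym s hs, transpose_apply]
    have e20 : Zs s 2 0 = Zs s 0 2 := by
      conv_lhs => rw [← hsym s hs, transpose_apply]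
    have e21 : Zs s 2 1 = Zs s 1 2 := by
      conv_lhs => rw [← hsym s hs, transpose_apply]
    simp only [hAdef, mcomm, Matrix.sub_apply, Matrix.smul_apply, Matrix.mul_apply,
      Fin.sum_univ_three, hat, smul_eq_mul, Matrix.cons_val', Matrix.cons_val_zero,
      Matrix.cons_val_one, Matrix.head_cons, Matrix.empty_val', Matrix.cons_val_fin_one,
      Matrix.head_fin_const, Matrix.cons_val_two, Matrix.tail_cons, Matrix.of_apply,
      pow_one, Nat.cast_ofNat]
    rw [e10, e20, e21]
    ring
  -- A decays
  have hAconst : ∀ s, 0 ≤ s → A s * Real.exp (4*ke*s) = A 0 := by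
    have h0 : ∀ s, 0 ≤ s → HasDerivAt (fun r => A r * Real.exp (4*ke*r)) 0 s := by
      intro s hs
      have he : HasDerivAt (fun r => Real.exp (4*ke*r)) ((4*ke) * Real.exp (4*ke*s)) s := by
        have := (hasDerivAt_id s).const_mul (4*ke)
        simpa [mul_comm] using this.exp
      have := (hAd s hs).fun_mul he
      refine this.congr_deriv ?_
      ring
    intro s hs
    have := key_const h0 s hs
    simpa using this
  -- derivative of W
  set W : ℝ → ℝ := fun s => kR * B s + Cc s + ε * D s with hWdef
  have hWd : ∀ s, 0 ≤ s → HasDerivAt W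
      (-2*kΩ*Cc s + ε*(-(kR*B s) - kΩ*D s + Cc s)) s := by
    intro s hs
    have hBd : HasDerivAt B (∑ i, (2:ℕ) * (z s i)^(2-1) *
        ((cross (z s) (Ω₀ s) + ω s) i)) s :=
      HasDerivAt.fun_sum fun i _ => (hzi s hs i).pow 2
    have hCd : HasDerivAt Cc (∑ i, (2:ℕ) * (ω s i)^(2-1) *
        (((-kR) • z s - kΩ • ω s + cross (ω s) (Ω₀ s)) i)) s :=
      HasDerivAt.fun_sum fun i _ => (hωi s hs i).pow 2
    have hDd : HasDerivAt D (∑ i, ((cross (z s) (Ω₀ s) + ω s) i * ω s i +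
        z s i * (((-kR) • z s - kΩ • ω s + cross (ω s) (Ω₀ s)) i))) s :=
      HasDerivAt.fun_sum fun i _ => by
        simpa [mul_comm, mul_add, add_comm] using (hzi s hs i).fun_mul (hωi s hs i)
    have hcomb := ((hBd.const_mul kR).fun_add hCd).fun_add (hDd.const_mul ε)
    refine hcomb.congr_deriv ?_
    simp only [hBdef, hCdef, hDdef, cross, Fin.sum_univ_three, Pi.add_apply,
      Pi.sub_apply, Pi.smul_apply, smul_eq_mul, Matrix.cons_val_zero,
      Matrix.cons_val_one, Matrix.head_cons, Matrix.cons_val_two, Matrix.tail_cons,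
      pow_one, Nat.cast_ofNat, neg_mul]
    ring
  -- W decays
  have hWle : ∀ s, 0 ≤ s → W s * Real.exp ((ε/2)*s) ≤ W 0 := by
    have h0 : ∀ s, 0 ≤ s → HasDerivAt (fun r => W r * Real.exp ((ε/2)*r))
        ((-2*kΩ*Cc s + ε*(-(kR*B s) - kΩ*D s + Cc s) + (ε/2) * W s)
          * Real.exp ((ε/2)*s)) s := by
      intro s hs
      have he : HasDerivAt (fun r => Real.exp ((ε/2)*r)) ((ε/2) * Real.exp ((ε/2)*s)) s := by
        have := (hasDerivAt_id s).const_mul (ε/2)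
        simpa [mul_comm] using this.exp
      have := (hWd s hs).fun_mul he
      refine this.congr_deriv ?_
      ring
    have hnp : ∀ s, 0 ≤ s →
        (-2*kΩ*Cc s + ε*(-(kR*B s) - kΩ*D s + Cc s) + (ε/2) * W s)
          * Real.exp ((ε/2)*s) ≤ 0 := by
      intro s hs
      have hq := quadIneq kR kΩ ε (B s) (Cc s) (D s) hkR hkΩ (hBnn s) (hCnn s)
        (hCS s) hε0 hεΩ hεRΩ
      have hWs : W s = kR * B s + Cc s + ε * D s := rfl
      nlinarith [Real.exp_pos ((ε/2)*s)]
    intro s hs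
    have := key_mono h0 hnp s hs
    simpa using this
  -- put things together
  have hE' : (0:ℝ) < Real.exp (-(ε/2)*t) := Real.exp_pos _
  have hWlow := Wequiv kR ε (B t) (Cc t) (D t) hkR (hBnn t) (hCnn t) (hCS t) hε0 hε1 hεR
  have hWhigh := Wequiv kR ε (B 0) (Cc 0) (D 0) hkR (hBnn 0) (hCnn 0) (hCS 0) hε0 hε1 hεR
  have hBC : B t + Cc t ≤ (3*M/m) * Real.exp (-(ε/2)*t) * (B 0 + Cc 0) := by
    have h1 : W t * Real.exp ((ε/2)*t) ≤ W 0 := hWle t ht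
    have hWt : W t = kR * B t + Cc t + ε * D t := rfl
    have hW0 : W 0 = kR * B 0 + Cc 0 + ε * D 0 := rfl
    have hp1 : m * B t ≤ kR * B t := mul_le_mul_of_nonneg_right hmkR (hBnn t)
    have hp2 : m * Cc t ≤ 1 * Cc t := mul_le_mul_of_nonneg_right hm1 (hCnn t)
    have hp3 : kR * B 0 ≤ M * B 0 := mul_le_mul_of_nonneg_right hkRM (hBnn 0)
    have hp4 : 1 * Cc 0 ≤ M * Cc 0 := mul_le_mul_of_nonneg_right h1M (hCnn 0)
    have h2 : m * (B t + Cc t) ≤ 2 * W t := by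
      have := hWlow.1
      rw [hWt]; linarith
    have h3 : 2 * W 0 ≤ 3*M*(B 0 + Cc 0) := by
      have := hWhigh.2
      rw [hW0] at *; linarith
    have hEpos : (0:ℝ) < Real.exp ((ε/2)*t) := Real.exp_pos _
    have h4 : m * (B t + Cc t) * Real.exp ((ε/2)*t) ≤ 3*M*(B 0 + Cc 0) := by
      calc m * (B t + Cc t) * Real.exp ((ε/2)*t) ≤ 2 * W t * Real.exp ((ε/2)*t) := by
            exact mul_le_mul_of_nonneg_right h2 hEpos.le
        _ = 2 * (W t * Real.exp ((ε/2)*t)) := by ring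
        _ ≤ 2 * W 0 := by linarith
        _ ≤ 3*M*(B 0 + Cc 0) := h3
    have h5 := mul_le_mul_of_nonneg_right h4 hE'.le
    have hEE : Real.exp ((ε/2)*t) * Real.exp (-(ε/2)*t) = 1 := by
      rw [← Real.exp_add]; norm_num
    have h6 : m * (B t + Cc t) ≤ 3*M*(B 0 + Cc 0) * Real.exp (-(ε/2)*t) := by
      calc m * (B t + Cc t)
          = m * (B t + Cc t) * (Real.exp ((ε/2)*t) * Real.exp (-(ε/2)*t)) := by
            rw [hEE, mul_one]
        _ = m * (B t + Cc t) * Real.exp ((ε/2)*t) * Real.exp (-(ε/2)*t) := by ring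
        _ ≤ 3*M*(B 0 + Cc 0) * Real.exp (-(ε/2)*t) := h5
    rw [div_mul_eq_mul_div, div_mul_eq_mul_div, le_div_iff₀ hm]
    linarith [h6]
  -- norms as square roots
  have hnormZ : ∀ s, ‖Zs s‖ = Real.sqrt (A s) := fun s => fro_norm (Zs s)
  have hnormz : ∀ s, enorm3 (z s) = Real.sqrt (B s) := fun s => rfl
  have hnormω : ∀ s, enorm3 (ω s) = Real.sqrt (Cc s) := fun s => rfl
  -- Zs part bound
  have hZbound : ‖Zs t‖ ≤ Real.exp (-lam*t) * ‖Zs 0‖ := by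
    rw [hnormZ, hnormZ]
    have hAt : A t = A 0 * Real.exp (-(4*ke)*t) := by
      have h := hAconst t ht
      have hEE : Real.exp (4*ke*t) * Real.exp (-(4*ke)*t) = 1 := by
        rw [← Real.exp_add]; norm_num
      calc A t = A t * (Real.exp (4*ke*t) * Real.exp (-(4*ke)*t)) := by rw [hEE, mul_one]
        _ = (A t * Real.exp (4*ke*t)) * Real.exp (-(4*ke)*t) := by ring
        _ = A 0 * Real.exp (-(4*ke)*t) := by rw [h]
    rw [hAt, Real.sqrt_mul (hAnn 0), sqrt_exp']
    have : Real.exp (-(4*ke)*t/2) ≤ Real.exp (-lam*t) := by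
      apply Real.exp_le_exp.2
      nlinarith
    calc Real.sqrt (A 0) * Real.exp (-(4*ke)*t/2)
        ≤ Real.sqrt (A 0) * Real.exp (-lam*t) :=
          mul_le_mul_of_nonneg_left this (Real.sqrt_nonneg _)
      _ = Real.exp (-lam*t) * Real.sqrt (A 0) := mul_comm _ _
  -- z, ω part bound
  have hzωbound : Real.sqrt (B t) + Real.sqrt (Cc t) ≤
      K * Real.exp (-lam*t) * (Real.sqrt (B 0) + Real.sqrt (Cc 0)) := by
    have s1 : Real.sqrt (B t) + Real.sqrt (Cc t) ≤ Real.sqrt (2*(B t + Cc t)) := by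
      rw [show Real.sqrt (B t) + Real.sqrt (Cc t)
          = Real.sqrt ((Real.sqrt (B t) + Real.sqrt (Cc t))^2) from
          (Real.sqrt_sq (by positivity)).symm]
      apply Real.sqrt_le_sqrt
      nlinarith [sq_nonneg (Real.sqrt (B t) - Real.sqrt (Cc t)),
        Real.sq_sqrt (hBnn t), Real.sq_sqrt (hCnn t)]
    have s2 : Real.sqrt (2*(B t + Cc t)) ≤
        Real.sqrt ((6*M/m) * Real.exp (-(ε/2)*t) * (B 0 + Cc 0)) := by
      apply Real.sqrt_le_sqrt
      calc 2 * (B t + Cc t) ≤ 2 * (3*M/m * Real.exp (-(ε/2)*t) * (B 0 + Cc 0)) := by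
            linarith
        _ = (6*M/m) * Real.exp (-(ε/2)*t) * (B 0 + Cc 0) := by ring
    have s3 : Real.sqrt ((6*M/m) * Real.exp (-(ε/2)*t) * (B 0 + Cc 0))
        = K * Real.exp (-(ε/2)*t/2) * Real.sqrt (B 0 + Cc 0) := by
      rw [Real.sqrt_mul (by positivity), Real.sqrt_mul (by positivity), sqrt_exp']
    have s4 : Real.sqrt (B 0 + Cc 0) ≤ Real.sqrt (B 0) + Real.sqrt (Cc 0) := by
      rw [show Real.sqrt (B 0) + Real.sqrt (Cc 0)
          = Real.sqrt ((Real.sqrt (B 0) + Real.sqrt (Cc 0))^2) from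
          (Real.sqrt_sq (by positivity)).symm]
      apply Real.sqrt_le_sqrt
      nlinarith [Real.sq_sqrt (hBnn 0), Real.sq_sqrt (hCnn 0),
        mul_nonneg (Real.sqrt_nonneg (B 0)) (Real.sqrt_nonneg (Cc 0))]
    have s5 : Real.exp (-(ε/2)*t/2) ≤ Real.exp (-lam*t) := by
      apply Real.exp_le_exp.2
      nlinarith
    calc Real.sqrt (B t) + Real.sqrt (Cc t)
        ≤ K * Real.exp (-(ε/2)*t/2) * Real.sqrt (B 0 + Cc 0) := by
          rw [← s3]; exact s1.trans s2
      _ ≤ K * Real.exp (-lam*t) * (Real.sqrt (B 0) + Real.sqrt (Cc 0)) := by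
          gcongr
  -- conclude
  rw [hnormZ t, hnormz t, hnormω t, hnormZ 0, hnormz 0, hnormω 0]
  rw [hnormZ t, hnormZ 0] at hZbound
  have hfinal : Real.sqrt (A 0) + K * (Real.sqrt (B 0) + Real.sqrt (Cc 0)) ≤
      (1 + K) * (Real.sqrt (A 0) + Real.sqrt (B 0) + Real.sqrt (Cc 0)) := by
    nlinarith [mul_nonneg hK0 (Real.sqrt_nonneg (A 0)), Real.sqrt_nonneg (B 0),
      Real.sqrt_nonneg (Cc 0)]
  calc Real.sqrt (A t) + Real.sqrt (B t) + Real.sqrt (Cc t)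
      ≤ Real.exp (-lam*t) * Real.sqrt (A 0)
        + K * Real.exp (-lam*t) * (Real.sqrt (B 0) + Real.sqrt (Cc 0)) := by
        linarith [hZbound, hzωbound]
    _ = Real.exp (-lam*t) * (Real.sqrt (A 0) + K * (Real.sqrt (B 0) + Real.sqrt (Cc 0)))
        := by ring
    _ ≤ Real.exp (-lam*t) *
        ((1 + K) * (Real.sqrt (A 0) + Real.sqrt (B 0) + Real.sqrt (Cc 0))) :=
        mul_le_mul_of_nonneg_left hfinal (Real.exp_pos _).le
    _ = (1 + K) * Real.exp (-lam*t) *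
        (Real.sqrt (A 0) + Real.sqrt (B 0) + Real.sqrt (Cc 0)) := by ring

end
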